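/- arXiv:2409.13767 — 2 statements merged into one kernel-verified Lean document; each statement's English description precedes it below -/
import Mathlib

section
/- Hohenberg–Kohn energy inequality argument: Let H be a Hilbert space and A₁, A₂ self-adjoint operators with common form domain, with A₂ = A₁ + P where P is a bounded symmetric operator. Suppose ψ₁ is a ground state of A₁ with energy E₁ = inf spec(A₁), ψ₂ is a ground state of A₂ with energy E₂, and ⟨ψ₁, P ψ₁⟩ = ⟨ψ₂, P ψ₂⟩ =: p. Then E₂ = E₁ + p, ψ₁ is also a ground state of A₂, and ψ₂ is also a ground state of A₁. -/
lemma aux_lb {H : Type*} [NormedAddCommGroup H] [InnerProductSpace ℂ H]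
    (A : H →L[ℂ] H) (ψ : H) (hψ : ‖ψ‖ = 1) : -‖A‖ ≤ (inner ℂ (A ψ) ψ : ℂ).re := by
  have h1 : ‖(inner ℂ (A ψ) ψ : ℂ)‖ ≤ ‖A ψ‖ * ‖ψ‖ := norm_inner_le_norm _ _
  have h2 : ‖A ψ‖ ≤ ‖A‖ * ‖ψ‖ := A.le_opNorm ψ
  have h3 : |(inner ℂ (A ψ) ψ : ℂ).re| ≤ ‖(inner ℂ (A ψ) ψ : ℂ)‖ := Complex.abs_re_le_norm _
  rw [hψ] at h1 h2
  have := abs_le.mp (h3.trans (h1.trans (by simpa using h2)))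
  linarith [this.1]

lemma aux_bdd {H : Type*} [NormedAddCommGroup H] [InnerProductSpace ℂ H]
    (A : H →L[ℂ] H) :
    BddBelow { e : ℝ | ∃ ψ : H, ‖ψ‖ = 1 ∧ e = (inner ℂ (A ψ) ψ : ℂ).re } := by
  refine ⟨-‖A‖, ?_⟩
  rintro e ⟨ψ, hψ, rfl⟩
  exact aux_lb A ψ hψ

/-- Hohenberg–Kohn energy inequality argument: if `A₂ = A₁ + P`, `ψᵢ` are ground states of
`Aᵢ` with energies `Eᵢ`, and both ground states have the same expectation `p` of `P`, then
`E₂ = E₁ + p` and each `ψᵢ` is a ground state of the other operator as well. -/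
theorem stmt_9 {H : Type*} [NormedAddCommGroup H] [InnerProductSpace ℂ H] [CompleteSpace H]
    (A₁ P : H →L[ℂ] H) (hA₁ : IsSelfAdjoint A₁) (hP : IsSelfAdjoint P)
    (ψ₁ ψ₂ : H) (E₁ E₂ p : ℝ) (hψ₁ : ‖ψ₁‖ = 1) (hψ₂ : ‖ψ₂‖ = 1)
    (hE₁ : E₁ = sInf { e : ℝ | ∃ ψ : H, ‖ψ‖ = 1 ∧ e = (inner ℂ (A₁ ψ) ψ : ℂ).re })
    (hE₂ : E₂ = sInf { e : ℝ | ∃ ψ : H, ‖ψ‖ = 1 ∧ e = (inner ℂ ((A₁ + P) ψ) ψ : ℂ).re })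
    (hg₁ : (inner ℂ (A₁ ψ₁) ψ₁ : ℂ).re = E₁)
    (hg₂ : (inner ℂ ((A₁ + P) ψ₂) ψ₂ : ℂ).re = E₂)
    (hp₁ : (inner ℂ (P ψ₁) ψ₁ : ℂ).re = p) (hp₂ : (inner ℂ (P ψ₂) ψ₂ : ℂ).re = p) :
    E₂ = E₁ + p ∧
    (inner ℂ ((A₁ + P) ψ₁) ψ₁ : ℂ).re = E₂ ∧
    (inner ℂ (A₁ ψ₂) ψ₂ : ℂ).re = E₁ := by
  have hsum₁ : (inner ℂ ((A₁ + P) ψ₁) ψ₁ : ℂ).re = E₁ + p := by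
    simp [ContinuousLinearMap.add_apply, inner_add_left, ← hg₁, ← hp₁]
  have hsum₂ : (inner ℂ (A₁ ψ₂) ψ₂ : ℂ).re = E₂ - p := by
    have : (inner ℂ ((A₁ + P) ψ₂) ψ₂ : ℂ).re
        = (inner ℂ (A₁ ψ₂) ψ₂ : ℂ).re + (inner ℂ (P ψ₂) ψ₂ : ℂ).re := by
      simp [ContinuousLinearMap.add_apply, inner_add_left]
    rw [hg₂, hp₂] at this
    linarith
  have h1 : E₂ ≤ E₁ + p := by
    rw [hE₂, ← hsum₁]
    exact csInf_le (aux_bdd (A₁ + P)) ⟨ψ₁, hψ₁, rfl⟩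
  have h2 : E₁ ≤ E₂ - p := by
    rw [hE₁, ← hsum₂]
    exact csInf_le (aux_bdd A₁) ⟨ψ₂, hψ₂, rfl⟩
  refine ⟨by linarith, ?_, ?_⟩
  · rw [hsum₁]; linarith
  · rw [hsum₂]; linarith
end

section
/- For N=1 at zero coupling (λ=0): the one-mode, one-qubit Levy–Lieb functional satisfies F_LL(σ,ξ) = 1 + ξ² - t√(1-σ²) for all (σ,ξ) ∈ [-1,1] × ℝ. That is, inf{ ⟨ψ, H₀ψ⟩ : ψ normalized, σ_ψ = σ, ξ_ψ = ξ } = 1 + ξ² - t√(1-σ²), where H₀ = (-d²/dx² + x²)𝟙 - t σ_x. -/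
open MeasureTheory Real

set_option maxHeartbeats 1000000

lemma hasDerivAt_normSq_c {f : ℝ → ℂ} {x : ℝ} (hf : HasDerivAt f (deriv f x) x) :
    HasDerivAt (fun y => ‖f y‖ ^ 2)
      (2 * ((starRingEnd ℂ) (f x) * deriv f x).re) x := by
  have hre : HasDerivAt (fun y => (f y).re) ((deriv f x).re) x :=
    (Complex.reCLM.hasFDerivAt.comp_hasDerivAt x hf)
  have him : HasDerivAt (fun y => (f y).im) ((deriv f x).im) x :=
    (Complex.imCLM.hasFDerivAt.comp_hasDerivAt x hf)
  have h : HasDerivAt (fun y => (f y).re ^ 2 + (f y).im ^ 2)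
      (2 * ((f x).re * (deriv f x).re + (f x).im * (deriv f x).im)) x := by
    convert ((hre.fun_mul hre).fun_add (him.fun_mul him)) using 1
    · rfl
    · rfl
    · funext y; ring
    · ring
  have heq : (fun y => ‖f y‖ ^ 2) = fun y => (f y).re ^ 2 + (f y).im ^ 2 := by
    funext y
    rw [Complex.sq_norm, Complex.normSq_apply]; ring
  rw [heq]
  convert h using 2
  simp only [Complex.mul_re, Complex.conj_re, Complex.conj_im]
  ring


lemma key_bound {f : ℝ → ℂ} (c : ℝ) (hf : Differentiable ℝ f)
    (h0 : Integrable (fun x => ‖f x‖ ^ 2))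
    (h1 : Integrable (fun x => ‖deriv f x‖ ^ 2))
    (h2 : Integrable (fun x => (x - c) ^ 2 * ‖f x‖ ^ 2)) :
    (∫ x, ‖f x‖ ^ 2) ≤ (∫ x, ‖deriv f x‖ ^ 2) + ∫ x, (x - c) ^ 2 * ‖f x‖ ^ 2 := by
  set u : ℝ → ℝ := fun x => ‖f x‖ ^ 2 with hu_def
  set u' : ℝ → ℝ := fun x => 2 * ((starRingEnd ℂ) (f x) * deriv f x).re with hu'_def
  have hu : ∀ x, HasDerivAt u (u' x) x := fun x => hasDerivAt_normSq_c (hf x).hasDerivAt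
  set v : ℝ → ℝ := fun x => (x - c) * u' x with hv_def
  -- pointwise bound on |v|
  have hb : ∀ x, |v x| ≤ (x - c) ^ 2 * ‖f x‖ ^ 2 + ‖deriv f x‖ ^ 2 := by
    intro x
    have h1' : |u' x| ≤ 2 * (‖f x‖ * ‖deriv f x‖) := by
      rw [hu'_def, abs_mul, abs_two]
      have : |((starRingEnd ℂ) (f x) * deriv f x).re| ≤ ‖(starRingEnd ℂ) (f x) * deriv f x‖ :=
        Complex.abs_re_le_norm _
      calc (2:ℝ) * |((starRingEnd ℂ) (f x) * deriv f x).re|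
          ≤ 2 * ‖(starRingEnd ℂ) (f x) * deriv f x‖ := by linarith
        _ = 2 * (‖f x‖ * ‖deriv f x‖) := by rw [norm_mul, RCLike.norm_conj]
    calc |v x| = |x - c| * |u' x| := by rw [hv_def]; exact abs_mul _ _
      _ ≤ |x - c| * (2 * (‖f x‖ * ‖deriv f x‖)) :=
          mul_le_mul_of_nonneg_left h1' (abs_nonneg _)
      _ = 2 * (|x - c| * ‖f x‖) * ‖deriv f x‖ := by ring
      _ ≤ (|x - c| * ‖f x‖) ^ 2 + ‖deriv f x‖ ^ 2 := two_mul_le_add_sq _ _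
      _ = (x - c) ^ 2 * ‖f x‖ ^ 2 + ‖deriv f x‖ ^ 2 := by rw [mul_pow, sq_abs]
  -- measurability
  have hmf : Continuous f := hf.continuous
  have hmderiv : AEStronglyMeasurable (deriv f) volume :=
    (measurable_deriv f).aestronglyMeasurable
  have hmu' : AEStronglyMeasurable u' volume := by
    apply AEStronglyMeasurable.const_mul
    exact (Complex.continuous_re.comp_aestronglyMeasurable
      (((Complex.continuous_conj.comp hmf).aestronglyMeasurable).mul hmderiv)).congr
      (Filter.EventuallyEq.refl _ _)
  have hv_int : Integrable v := by
    apply Integrable.mono' (h2.add h1)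
      (((continuous_id.sub continuous_const).aestronglyMeasurable).mul hmu')
    filter_upwards with x
    rw [Real.norm_eq_abs]
    exact hb x
  -- w = (x - c) * u, integrable with integrable derivative
  set w : ℝ → ℝ := fun x => (x - c) * u x with hw_def
  have hw : ∀ x, HasDerivAt w (u x + v x) x := by
    intro x
    have := ((hasDerivAt_id x).sub_const c).fun_mul (hu x)
    simp only [id_eq, one_mul] at this
    convert this using 1
    try rw [hv_def]
    try ring
  have hw_cont : Continuous w := (continuous_id.sub continuous_const).mul ((hmf.norm).pow 2)
  have hw_int : Integrable w := by
    apply Integrable.mono' (((h2.add h0)).div_const 2) hw_cont.aestronglyMeasurable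
    filter_upwards with x
    rw [Real.norm_eq_abs]
    show |(x - c) * u x| ≤ ((x - c) ^ 2 * ‖f x‖ ^ 2 + ‖f x‖ ^ 2) / 2
    have h2' : (0:ℝ) ≤ ‖f x‖ ^ 2 := by positivity
    have : |(x - c) * u x| = |x - c| * u x := by
      rw [abs_mul, abs_of_nonneg h2']
    rw [this]
    have : |x - c| * u x ≤ ((x-c)^2 + 1)/2 * u x := by
      apply mul_le_mul_of_nonneg_right _ h2'
      nlinarith [sq_abs (x - c), sq_nonneg (|x - c| - 1)]
    calc |x - c| * u x ≤ ((x-c)^2 + 1)/2 * u x := this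
      _ = ((x - c) ^ 2 * ‖f x‖ ^ 2 + ‖f x‖ ^ 2) / 2 := by rw [hu_def]; ring
  have hw'_int : Integrable (fun x => u x + v x) := h0.add hv_int
  have hzero : (∫ x, (u x + v x)) = 0 :=
    integral_eq_zero_of_hasDerivAt_of_integrable hw hw'_int hw_int
  rw [integral_add h0 hv_int] at hzero
  have hvu : (∫ x, v x) = - ∫ x, u x := by linarith
  have : (∫ x, u x) ≤ ∫ x, ((x - c) ^ 2 * ‖f x‖ ^ 2 + ‖deriv f x‖ ^ 2) := by
    calc (∫ x, u x) = - ∫ x, v x := by rw [hvu]; ring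
      _ ≤ |∫ x, v x| := neg_le_abs _
      _ ≤ ∫ x, |v x| := by
          simpa [Real.norm_eq_abs] using norm_integral_le_integral_norm (μ := volume) v
      _ ≤ ∫ x, ((x - c) ^ 2 * ‖f x‖ ^ 2 + ‖deriv f x‖ ^ 2) := by
          apply integral_mono hv_int.abs (h2.add h1)
          intro x; exact hb x
  rw [integral_add h2 h1] at this
  linarith

lemma integrable_exp1 : Integrable fun x : ℝ => Real.exp (-x^2) := by
  simpa using integrable_exp_neg_mul_sq one_pos

lemma integrable_xexp : Integrable fun x : ℝ => x * Real.exp (-x^2) := by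
  simpa using integrable_mul_exp_neg_mul_sq one_pos

lemma integrable_x2exp : Integrable fun x : ℝ => x^2 * Real.exp (-x^2) := by
  apply Integrable.mono' (g := fun x : ℝ => 2 * Real.exp (-(1/2 : ℝ) * x^2))
    ((integrable_exp_neg_mul_sq (by norm_num : (0:ℝ) < 1/2)).const_mul 2)
    (((continuous_pow 2).fun_mul ((continuous_pow 2).neg.rexp)).aestronglyMeasurable)
  filter_upwards with x
  rw [Real.norm_eq_abs, abs_of_nonneg (by positivity)]
  have h1 : x^2/2 ≤ Real.exp (x^2/2) := by
    have := Real.add_one_le_exp (x^2/2); linarith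
  have h2 : x^2 * Real.exp (-x^2) ≤ (2 * Real.exp (x^2/2)) * Real.exp (-x^2) := by
    apply mul_le_mul_of_nonneg_right (by linarith) (le_of_lt (Real.exp_pos _))
  calc x^2 * Real.exp (-x^2) ≤ (2 * Real.exp (x^2/2)) * Real.exp (-x^2) := h2
    _ = 2 * Real.exp (-(1/2 : ℝ) * x^2) := by
        rw [mul_assoc, ← Real.exp_add]; ring_nf

lemma int_exp1 : ∫ x : ℝ, Real.exp (-x^2) = Real.sqrt π := by
  have := integral_gaussian 1
  simpa using this

lemma int_xexp : ∫ x : ℝ, x * Real.exp (-x^2) = 0 := by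
  have hderiv : ∀ x : ℝ, HasDerivAt (fun y : ℝ => -Real.exp (-y^2)/2)
      (x * Real.exp (-x^2)) x := by
    intro x
    have h1 : HasDerivAt (fun y : ℝ => -y^2) (-(2*x)) x := by
      simpa using (hasDerivAt_pow 2 x).fun_neg
    have h2 := h1.exp
    have h3 := (h2.fun_neg).div_const 2
    convert h3 using 1
    · rfl
    · rfl
    ring
  have hw_int : Integrable (fun y : ℝ => -Real.exp (-y^2)/2) :=
    (integrable_exp1.neg).div_const 2
  exact integral_eq_zero_of_hasDerivAt_of_integrable hderiv integrable_xexp hw_int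

lemma int_x2exp : ∫ x : ℝ, x^2 * Real.exp (-x^2) = Real.sqrt π / 2 := by
  have hderiv : ∀ x : ℝ, HasDerivAt (fun y : ℝ => y * Real.exp (-y^2))
      (Real.exp (-x^2) - 2 * (x^2 * Real.exp (-x^2))) x := by
    intro x
    have h1 : HasDerivAt (fun y : ℝ => -y^2) (-(2*x)) x := by
      simpa using (hasDerivAt_pow 2 x).fun_neg
    have h2 := (hasDerivAt_id x).fun_mul h1.exp
    simp only [id_eq, one_mul] at h2
    convert h2 using 1
    · rfl
    · rfl
    ring
  have h_int : Integrable (fun x : ℝ => Real.exp (-x^2) - 2 * (x^2 * Real.exp (-x^2))) :=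
    integrable_exp1.sub (integrable_x2exp.const_mul 2)
  have hzero : (∫ x : ℝ, (Real.exp (-x^2) - 2 * (x^2 * Real.exp (-x^2)))) = 0 :=
    integral_eq_zero_of_hasDerivAt_of_integrable hderiv h_int integrable_xexp
  rw [integral_sub integrable_exp1 (integrable_x2exp.const_mul 2),
    MeasureTheory.integral_const_mul, int_exp1] at hzero
  linarith

lemma gaussian_member (t σ ξ : ℝ) (hσ : σ ∈ Set.Icc (-1 : ℝ) 1) :
    ∃ f g : ℝ → ℂ,
      Differentiable ℝ f ∧ Differentiable ℝ g ∧
      Integrable (fun x => ‖f x‖ ^ 2) ∧ Integrable (fun x => ‖g x‖ ^ 2) ∧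
      Integrable (fun x => ‖deriv f x‖ ^ 2) ∧ Integrable (fun x => ‖deriv g x‖ ^ 2) ∧
      Integrable (fun x => x ^ 2 * (‖f x‖ ^ 2 + ‖g x‖ ^ 2)) ∧
      Integrable (fun x => x * (‖f x‖ ^ 2 + ‖g x‖ ^ 2)) ∧
      Integrable (fun x => (starRingEnd ℂ) (f x) * g x) ∧
      (∫ x : ℝ, (‖f x‖ ^ 2 + ‖g x‖ ^ 2)) = 1 ∧
      (∫ x : ℝ, (‖f x‖ ^ 2 - ‖g x‖ ^ 2)) = σ ∧
      (∫ x : ℝ, x * (‖f x‖ ^ 2 + ‖g x‖ ^ 2)) = ξ ∧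
      (1 + ξ ^ 2 - t * Real.sqrt (1 - σ ^ 2))
        = (∫ x : ℝ, (‖deriv f x‖ ^ 2 + ‖deriv g x‖ ^ 2 + x ^ 2 * (‖f x‖ ^ 2 + ‖g x‖ ^ 2)))
          - 2 * t * (∫ x : ℝ, (starRingEnd ℂ) (f x) * g x).re := by
  obtain ⟨hσ1, hσ2⟩ := hσ
  have hap : (0:ℝ) ≤ (1 + σ)/2 := by linarith
  have hbp : (0:ℝ) ≤ (1 - σ)/2 := by linarith
  set a : ℝ := Real.sqrt ((1 + σ)/2) with ha_def
  set b : ℝ := Real.sqrt ((1 - σ)/2) with hb_def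
  set N : ℝ := (Real.sqrt (Real.sqrt π))⁻¹ with hN_def
  have ha2 : a^2 = (1 + σ)/2 := Real.sq_sqrt hap
  have hb2 : b^2 = (1 - σ)/2 := Real.sq_sqrt hbp
  have hπ : (0:ℝ) < Real.sqrt π := Real.sqrt_pos.mpr pi_pos
  have hN2 : N^2 = (Real.sqrt π)⁻¹ := by
    rw [hN_def, inv_pow, Real.sq_sqrt hπ.le]
  have hN2π : N^2 * Real.sqrt π = 1 := by rw [hN2]; field_simp
  set E : ℝ → ℝ := fun x => Real.exp (-(x - ξ)^2) with hE_def
  -- basic integrability / integrals of E-family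
  have hE : Integrable E := by
    have := integrable_exp1.comp_sub_right (g := ξ); exact this
  have hxE : Integrable (fun x => (x - ξ) * E x) := by
    have := integrable_xexp.comp_sub_right (g := ξ); exact this
  have hx2E : Integrable (fun x => (x - ξ)^2 * E x) := by
    have := integrable_x2exp.comp_sub_right (g := ξ); exact this
  have iE : ∫ x, E x = Real.sqrt π := by
    rw [hE_def]
    rw [show (fun x => Real.exp (-(x - ξ)^2)) = fun x => (fun y => Real.exp (-y^2)) (x - ξ) from rfl]
    rw [integral_sub_right_eq_self (fun y => Real.exp (-y^2)) ξ]
    exact int_exp1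
  have ixE : ∫ x, (x - ξ) * E x = 0 := by
    rw [show (fun x => (x - ξ) * E x) = fun x => (fun y => y * Real.exp (-y^2)) (x - ξ) from rfl]
    rw [integral_sub_right_eq_self (fun y => y * Real.exp (-y^2)) ξ]
    exact int_xexp
  have ix2E : ∫ x, (x - ξ)^2 * E x = Real.sqrt π / 2 := by
    rw [show (fun x => (x - ξ)^2 * E x) = fun x => (fun y => y^2 * Real.exp (-y^2)) (x - ξ) from rfl]
    rw [integral_sub_right_eq_self (fun y => y^2 * Real.exp (-y^2)) ξ]
    exact int_x2exp
  have hxE' : Integrable (fun x => x * E x) := by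
    have h : (fun x => x * E x) = fun x => (x - ξ) * E x + ξ * E x := by funext x; ring
    rw [h]; exact hxE.add (hE.const_mul ξ)
  have hx2E' : Integrable (fun x => x^2 * E x) := by
    have h : (fun x => x^2 * E x)
        = fun x => ((x - ξ)^2 * E x + (2*ξ) * ((x - ξ) * E x)) + ξ^2 * E x := by
      funext x; ring
    rw [h]; exact (hx2E.add (hxE.const_mul (2*ξ))).add (hE.const_mul (ξ^2))
  have ixE' : ∫ x, x * E x = ξ * Real.sqrt π := by
    have h : (fun x => x * E x) = fun x => (x - ξ) * E x + ξ * E x := by funext x; ring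
    rw [h, integral_add hxE (hE.const_mul ξ), ixE, integral_const_mul, iE]; ring
  have ix2E' : ∫ x, x^2 * E x = Real.sqrt π / 2 + ξ^2 * Real.sqrt π := by
    have h : (fun x => x^2 * E x)
        = fun x => ((x - ξ)^2 * E x + (2*ξ) * ((x - ξ) * E x)) + ξ^2 * E x := by
      funext x; ring
    have h1 : Integrable (fun x => (x - ξ)^2 * E x + (2*ξ) * ((x - ξ) * E x)) :=
      hx2E.add (hxE.const_mul (2*ξ))
    rw [h, integral_add h1 (hE.const_mul (ξ^2)),
      integral_add hx2E (hxE.const_mul (2*ξ)), ix2E, integral_const_mul, integral_const_mul,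
      ixE, iE]
    ring
  -- the wavefunctions
  set f : ℝ → ℂ := fun x => ((a * N * Real.exp (-(x - ξ)^2/2) : ℝ) : ℂ) with hf_def
  set g : ℝ → ℂ := fun x => ((b * N * Real.exp (-(x - ξ)^2/2) : ℝ) : ℂ) with hg_def
  have hexp2 : ∀ x : ℝ, Real.exp (-(x - ξ)^2/2) ^ 2 = E x := by
    intro x; rw [sq, ← Real.exp_add, hE_def]; ring_nf
  have hnf : ∀ x, ‖f x‖ ^ 2 = a^2 * N^2 * E x := by
    intro x
    rw [hf_def]
    rw [Complex.norm_real, Real.norm_eq_abs, sq_abs, mul_pow, mul_pow, hexp2]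
  have hng : ∀ x, ‖g x‖ ^ 2 = b^2 * N^2 * E x := by
    intro x
    rw [hg_def]
    rw [Complex.norm_real, Real.norm_eq_abs, sq_abs, mul_pow, mul_pow, hexp2]
  -- derivatives
  have hfd : ∀ x, HasDerivAt f ((-(x - ξ) * (a * N * Real.exp (-(x - ξ)^2/2)) : ℝ) : ℂ) x := by
    intro x
    have h1 : HasDerivAt (fun y : ℝ => -(y - ξ)^2/2) (-(x - ξ)) x := by
      have := (((hasDerivAt_id x).sub_const ξ).fun_pow 2).fun_neg.div_const 2
      convert this using 1
      · rfl
      · rfl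
      simp; rw [id_eq]; ring
    have h2 := h1.exp.const_mul (a * N)
    have h3 : HasDerivAt (fun y : ℝ => a * N * Real.exp (-(y - ξ)^2/2))
        (-(x - ξ) * (a * N * Real.exp (-(x - ξ)^2/2))) x := by
      convert h2 using 1
      · rfl
      · rfl
      ring
    exact h3.ofReal_comp
  have hgd : ∀ x, HasDerivAt g ((-(x - ξ) * (b * N * Real.exp (-(x - ξ)^2/2)) : ℝ) : ℂ) x := by
    intro x
    have h1 : HasDerivAt (fun y : ℝ => -(y - ξ)^2/2) (-(x - ξ)) x := by
      have := (((hasDerivAt_id x).sub_const ξ).fun_pow 2).fun_neg.div_const 2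
      convert this using 1
      · rfl
      · rfl
      simp; rw [id_eq]; ring
    have h2 := h1.exp.const_mul (b * N)
    have h3 : HasDerivAt (fun y : ℝ => b * N * Real.exp (-(y - ξ)^2/2))
        (-(x - ξ) * (b * N * Real.exp (-(x - ξ)^2/2))) x := by
      convert h2 using 1
      · rfl
      · rfl
      ring
    exact h3.ofReal_comp
  have hdf : Differentiable ℝ f := fun x => (hfd x).differentiableAt
  have hdg : Differentiable ℝ g := fun x => (hgd x).differentiableAt
  have hndf : ∀ x, ‖deriv f x‖ ^ 2 = a^2 * N^2 * ((x - ξ)^2 * E x) := by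
    intro x
    rw [(hfd x).deriv, Complex.norm_real, Real.norm_eq_abs, sq_abs]
    rw [mul_pow, mul_pow, mul_pow, hexp2]
    ring
  have hndg : ∀ x, ‖deriv g x‖ ^ 2 = b^2 * N^2 * ((x - ξ)^2 * E x) := by
    intro x
    rw [(hgd x).deriv, Complex.norm_real, Real.norm_eq_abs, sq_abs]
    rw [mul_pow, mul_pow, mul_pow, hexp2]
    ring
  have hfg : ∀ x, (starRingEnd ℂ) (f x) * g x = ((a * b * N^2 * E x : ℝ) : ℂ) := by
    intro x
    rw [hf_def, hg_def, Complex.conj_ofReal, ← Complex.ofReal_mul]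
    congr 1
    linear_combination a * b * N^2 * hexp2 x
  refine ⟨f, g, hdf, hdg, ?_, ?_, ?_, ?_, ?_, ?_, ?_, ?_, ?_, ?_, ?_⟩
  · rw [show (fun x => ‖f x‖ ^ 2) = fun x => a^2*N^2 * E x from funext hnf]
    exact hE.const_mul _
  · rw [show (fun x => ‖g x‖ ^ 2) = fun x => b^2*N^2 * E x from funext hng]
    exact hE.const_mul _
  · rw [show (fun x => ‖deriv f x‖ ^ 2) = fun x => a^2*N^2 * ((x - ξ)^2 * E x) from funext hndf]
    exact hx2E.const_mul _
  · rw [show (fun x => ‖deriv g x‖ ^ 2) = fun x => b^2*N^2 * ((x - ξ)^2 * E x) from funext hndg]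
    exact hx2E.const_mul _
  · have h : (fun x => x ^ 2 * (‖f x‖ ^ 2 + ‖g x‖ ^ 2))
        = fun x => (a^2+b^2)*N^2 * (x^2 * E x) := by
      funext x; rw [hnf, hng]; ring
    rw [h]; exact hx2E'.const_mul _
  · have h : (fun x => x * (‖f x‖ ^ 2 + ‖g x‖ ^ 2))
        = fun x => (a^2+b^2)*N^2 * (x * E x) := by
      funext x; rw [hnf, hng]; ring
    rw [h]; exact hxE'.const_mul _
  · rw [show (fun x => (starRingEnd ℂ) (f x) * g x)
        = fun x => ((a*b*N^2 * E x : ℝ) : ℂ) from funext hfg]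
    exact (hE.const_mul _).ofReal
  · have h : (fun x : ℝ => ‖f x‖ ^ 2 + ‖g x‖ ^ 2) = fun x => (a^2+b^2)*N^2 * E x := by
      funext x; rw [hnf, hng]; ring
    rw [h, integral_const_mul, iE, ha2, hb2]
    linear_combination hN2π
  · have h : (fun x : ℝ => ‖f x‖ ^ 2 - ‖g x‖ ^ 2) = fun x => (a^2-b^2)*N^2 * E x := by
      funext x; rw [hnf, hng]; ring
    rw [h, integral_const_mul, iE, ha2, hb2]
    linear_combination σ * hN2π
  · have h : (fun x : ℝ => x * (‖f x‖ ^ 2 + ‖g x‖ ^ 2))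
        = fun x => (a^2+b^2)*N^2 * (x * E x) := by
      funext x; rw [hnf, hng]; ring
    rw [h, integral_const_mul, ixE', ha2, hb2]
    linear_combination ξ * hN2π
  · -- the energy identity
    have h : (fun x : ℝ => ‖deriv f x‖ ^ 2 + ‖deriv g x‖ ^ 2 + x ^ 2 * (‖f x‖ ^ 2 + ‖g x‖ ^ 2))
        = fun x => (a^2+b^2)*N^2 * ((x - ξ)^2 * E x) + (a^2+b^2)*N^2 * (x^2 * E x) := by
      funext x; rw [hnf, hng, hndf, hndg]; ring
    have hab1 : a^2 + b^2 = 1 := by rw [ha2, hb2]; ring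
    have hint : (∫ x : ℝ, (‖deriv f x‖ ^ 2 + ‖deriv g x‖ ^ 2 + x ^ 2 * (‖f x‖ ^ 2 + ‖g x‖ ^ 2)))
        = 1 + ξ^2 := by
      have hI1 : Integrable (fun x => (a^2+b^2)*N^2 * ((x - ξ)^2 * E x)) := hx2E.const_mul _
      have hI2 : Integrable (fun x => (a^2+b^2)*N^2 * (x^2 * E x)) := hx2E'.const_mul _
      rw [h, integral_add hI1 hI2, integral_const_mul, integral_const_mul, ix2E, ix2E', hab1]
      linear_combination (1 + ξ^2) * hN2π
    have hfgint : (∫ x : ℝ, (starRingEnd ℂ) (f x) * g x).re = a * b * N^2 * Real.sqrt π := by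
      rw [show (fun x => (starRingEnd ℂ) (f x) * g x)
          = fun x => ((a*b*N^2 * E x : ℝ) : ℂ) from funext hfg]
      have hcast : (∫ x : ℝ, ((a*b*N^2 * E x : ℝ) : ℂ)) = ((∫ x : ℝ, a*b*N^2 * E x : ℝ) : ℂ) :=
        integral_ofReal (𝕜 := ℂ)
      rw [hcast, Complex.ofReal_re, integral_const_mul, iE]
    have hab : 2 * (a * b) = Real.sqrt (1 - σ^2) := by
      rw [ha_def, hb_def, ← Real.sqrt_mul hap]
      rw [show (1 + σ)/2 * ((1 - σ)/2) = (1 - σ^2) * (1/2)^2 by ring]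
      rw [Real.sqrt_mul (by nlinarith) ((1/2:ℝ)^2), Real.sqrt_sq (by norm_num : (0:ℝ) ≤ 1/2)]
      ring
    rw [hint, hfgint]
    have : a * b * N ^ 2 * Real.sqrt π = a * b := by
      rw [mul_assoc, hN2π, mul_one]
    rw [this]
    linear_combination t * hab

lemma lower_bound (t : ℝ) (ht : 0 < t) (σ ξ : ℝ) (hσ : σ ∈ Set.Icc (-1 : ℝ) 1)
    (f g : ℝ → ℂ)
    (hdf : Differentiable ℝ f) (hdg : Differentiable ℝ g)
    (h3 : Integrable (fun x => ‖f x‖ ^ 2)) (h4 : Integrable (fun x => ‖g x‖ ^ 2))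
    (h5 : Integrable (fun x => ‖deriv f x‖ ^ 2)) (h6 : Integrable (fun x => ‖deriv g x‖ ^ 2))
    (h7 : Integrable (fun x => x ^ 2 * (‖f x‖ ^ 2 + ‖g x‖ ^ 2)))
    (h8 : Integrable (fun x => x * (‖f x‖ ^ 2 + ‖g x‖ ^ 2)))
    (h9 : Integrable (fun x => (starRingEnd ℂ) (f x) * g x))
    (h10 : (∫ x : ℝ, (‖f x‖ ^ 2 + ‖g x‖ ^ 2)) = 1)
    (h11 : (∫ x : ℝ, (‖f x‖ ^ 2 - ‖g x‖ ^ 2)) = σ)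
    (h12 : (∫ x : ℝ, x * (‖f x‖ ^ 2 + ‖g x‖ ^ 2)) = ξ) :
    1 + ξ ^ 2 - t * Real.sqrt (1 - σ ^ 2)
      ≤ (∫ x : ℝ, (‖deriv f x‖ ^ 2 + ‖deriv g x‖ ^ 2 + x ^ 2 * (‖f x‖ ^ 2 + ‖g x‖ ^ 2)))
        - 2 * t * (∫ x : ℝ, (starRingEnd ℂ) (f x) * g x).re := by
  obtain ⟨hσ1, hσ2⟩ := hσ
  have hcf : Continuous f := hdf.continuous
  have hcg : Continuous g := hdg.continuous
  -- auxiliary integrabilities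
  have hx2f : Integrable (fun x => x^2 * ‖f x‖^2) := by
    apply h7.mono' (((continuous_pow 2).fun_mul ((hcf.norm).fun_pow 2)).aestronglyMeasurable)
    filter_upwards with x
    rw [Real.norm_eq_abs, abs_of_nonneg (by positivity)]
    nlinarith [sq_nonneg x, norm_nonneg (g x), sq_nonneg (x * ‖g x‖)]
  have hx2g : Integrable (fun x => x^2 * ‖g x‖^2) := by
    apply h7.mono' (((continuous_pow 2).fun_mul ((hcg.norm).fun_pow 2)).aestronglyMeasurable)
    filter_upwards with x
    rw [Real.norm_eq_abs, abs_of_nonneg (by positivity)]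
    nlinarith [sq_nonneg (x * ‖f x‖)]
  have hxf : Integrable (fun x => x * ‖f x‖^2) := by
    apply h8.abs.mono' ((continuous_id.fun_mul ((hcf.norm).fun_pow 2)).aestronglyMeasurable)
    filter_upwards with x
    rw [Real.norm_eq_abs, abs_mul, abs_mul, abs_of_nonneg (a := ‖f x‖^2) (by positivity),
      abs_of_nonneg (a := ‖f x‖^2 + ‖g x‖^2) (by positivity)]
    simp only [id_eq]
    nlinarith [mul_nonneg (abs_nonneg x) (sq_nonneg (‖g x‖))]
  have hxg : Integrable (fun x => x * ‖g x‖^2) := by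
    apply h8.abs.mono' ((continuous_id.fun_mul ((hcg.norm).fun_pow 2)).aestronglyMeasurable)
    filter_upwards with x
    rw [Real.norm_eq_abs, abs_mul, abs_mul, abs_of_nonneg (a := ‖g x‖^2) (by positivity),
      abs_of_nonneg (a := ‖f x‖^2 + ‖g x‖^2) (by positivity)]
    simp only [id_eq]
    nlinarith [mul_nonneg (abs_nonneg x) (sq_nonneg (‖f x‖))]
  have hsf : Integrable (fun x => (x - ξ)^2 * ‖f x‖^2) := by
    have h : (fun x => (x - ξ)^2 * ‖f x‖^2)
        = fun x => (x^2 * ‖f x‖^2 - (2*ξ) * (x * ‖f x‖^2)) + ξ^2 * ‖f x‖^2 := by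
      funext x; ring
    rw [h]; exact (hx2f.sub (hxf.const_mul (2*ξ))).add (h3.const_mul (ξ^2))
  have hsg : Integrable (fun x => (x - ξ)^2 * ‖g x‖^2) := by
    have h : (fun x => (x - ξ)^2 * ‖g x‖^2)
        = fun x => (x^2 * ‖g x‖^2 - (2*ξ) * (x * ‖g x‖^2)) + ξ^2 * ‖g x‖^2 := by
      funext x; ring
    rw [h]; exact (hx2g.sub (hxg.const_mul (2*ξ))).add (h4.const_mul (ξ^2))
  have hAB1 : (∫ x, ‖f x‖^2) + (∫ x, ‖g x‖^2) = 1 := by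
    rw [← integral_add h3 h4]; exact h10
  have hABσ : (∫ x, ‖f x‖^2) - (∫ x, ‖g x‖^2) = σ := by
    rw [← integral_sub h3 h4]; exact h11

  -- split the moment integrals
  have hPsplit : (∫ x, x^2 * (‖f x‖^2 + ‖g x‖^2))
      = (∫ x, x^2 * ‖f x‖^2) + ∫ x, x^2 * ‖g x‖^2 := by
    rw [← integral_add hx2f hx2g]
    congr 1; funext x; ring
  have hXsplit : (∫ x, x * ‖f x‖^2) + (∫ x, x * ‖g x‖^2) = ξ := by
    rw [← integral_add hxf hxg, ← h12]
    congr 1; funext x; ring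
  -- harmonic oscillator bound for each component
  have hkf := key_bound ξ hdf h3 h5 hsf
  have hkg := key_bound ξ hdg h4 h6 hsg
  have hSf : (∫ x, (x - ξ)^2 * ‖f x‖^2)
      = (∫ x, x^2 * ‖f x‖^2) - 2*ξ*(∫ x, x * ‖f x‖^2) + ξ^2 * (∫ x, ‖f x‖^2) := by
    have h : (fun x => (x - ξ)^2 * ‖f x‖^2)
        = fun x => (x^2 * ‖f x‖^2 - (2*ξ) * (x * ‖f x‖^2)) + ξ^2 * ‖f x‖^2 := by
      funext x; ring
    have h1 : Integrable (fun x => x^2 * ‖f x‖^2 - (2*ξ) * (x * ‖f x‖^2)) :=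
      hx2f.sub (hxf.const_mul (2*ξ))
    rw [h, integral_add h1 (h3.const_mul (ξ^2)),
      integral_sub hx2f (hxf.const_mul (2*ξ)), integral_const_mul, integral_const_mul]
    try ring
  have hSg : (∫ x, (x - ξ)^2 * ‖g x‖^2)
      = (∫ x, x^2 * ‖g x‖^2) - 2*ξ*(∫ x, x * ‖g x‖^2) + ξ^2 * (∫ x, ‖g x‖^2) := by
    have h : (fun x => (x - ξ)^2 * ‖g x‖^2)
        = fun x => (x^2 * ‖g x‖^2 - (2*ξ) * (x * ‖g x‖^2)) + ξ^2 * ‖g x‖^2 := by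
      funext x; ring
    have h1 : Integrable (fun x => x^2 * ‖g x‖^2 - (2*ξ) * (x * ‖g x‖^2)) :=
      hx2g.sub (hxg.const_mul (2*ξ))
    rw [h, integral_add h1 (h4.const_mul (ξ^2)),
      integral_sub hx2g (hxg.const_mul (2*ξ)), integral_const_mul, integral_const_mul]
    try ring
  -- the big integral splits
  have hbig : (∫ x : ℝ, (‖deriv f x‖ ^ 2 + ‖deriv g x‖ ^ 2 + x ^ 2 * (‖f x‖ ^ 2 + ‖g x‖ ^ 2)))
      = (∫ x, ‖deriv f x‖^2) + (∫ x, ‖deriv g x‖^2) + ∫ x, x^2 * (‖f x‖^2 + ‖g x‖^2) := by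
    have h56 : Integrable (fun x => ‖deriv f x‖^2 + ‖deriv g x‖^2) := h5.add h6
    rw [integral_add h56 h7, integral_add h5 h6]
  -- kinetic + potential lower bound
  have hKLP : 1 + ξ^2 ≤ (∫ x, ‖deriv f x‖^2) + (∫ x, ‖deriv g x‖^2)
      + ∫ x, x^2 * (‖f x‖^2 + ‖g x‖^2) := by
    have hsum := add_le_add hkf hkg
    rw [hSf, hSg] at hsum
    have hX2 : 2*ξ*((∫ x, x * ‖f x‖^2) + ∫ x, x * ‖g x‖^2) = 2*ξ*ξ := by rw [hXsplit]
    rw [hPsplit]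
    nlinarith [hAB1, hsum, hX2]
  -- Cauchy–Schwarz for the cross term
  have hcs : (∫ x : ℝ, (starRingEnd ℂ) (f x) * g x).re ≤ Real.sqrt (1 - σ^2) / 2 := by
    have hre : (∫ x : ℝ, (starRingEnd ℂ) (f x) * g x).re
        = ∫ x : ℝ, ((starRingEnd ℂ) (f x) * g x).re := (integral_re h9).symm
    have hnormint : Integrable (fun x => ‖f x‖ * ‖g x‖) := by
      have h : (fun x : ℝ => ‖f x‖ * ‖g x‖) = fun x => ‖(starRingEnd ℂ) (f x) * g x‖ := by
        funext x; rw [norm_mul, RCLike.norm_conj]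
      rw [h]; exact h9.norm
    have step1 : (∫ x : ℝ, ((starRingEnd ℂ) (f x) * g x).re) ≤ ∫ x, ‖f x‖ * ‖g x‖ := by
      apply integral_mono h9.re hnormint
      intro x
      calc ((starRingEnd ℂ) (f x) * g x).re ≤ ‖(starRingEnd ℂ) (f x) * g x‖ :=
            Complex.re_le_norm _
        _ = ‖f x‖ * ‖g x‖ := by
            rw [norm_mul, RCLike.norm_conj]
    have hpq : (2:ℝ).HolderConjugate 2 := Real.HolderConjugate.two_two
    have hmf : MemLp (fun x : ℝ => ‖f x‖) (ENNReal.ofReal 2) := by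
      rw [show ENNReal.ofReal 2 = 2 by norm_num]
      exact (memLp_two_iff_integrable_sq (hcf.norm.aestronglyMeasurable)).mpr h3
    have hmg : MemLp (fun x : ℝ => ‖g x‖) (ENNReal.ofReal 2) := by
      rw [show ENNReal.ofReal 2 = 2 by norm_num]
      exact (memLp_two_iff_integrable_sq (hcg.norm.aestronglyMeasurable)).mpr h4
    have step2 := integral_mul_le_Lp_mul_Lq_of_nonneg hpq
      (Filter.Eventually.of_forall (fun x => norm_nonneg (f x)))
      (Filter.Eventually.of_forall (fun x => norm_nonneg (g x))) hmf hmg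
    have hrw : ∀ h : ℝ → ℂ, (∫ x : ℝ, ‖h x‖ ^ (2:ℝ)) = ∫ x : ℝ, ‖h x‖ ^ 2 := by
      intro h; congr 1; funext x
      rw [show ((2:ℝ)) = ((2:ℕ):ℝ) by norm_num, Real.rpow_natCast]
    rw [hrw f, hrw g] at step2
    set A := ∫ x, ‖f x‖^2 with hA
    set B := ∫ x, ‖g x‖^2 with hB
    have hAval : A = (1 + σ)/2 := by linarith
    have hBval : B = (1 - σ)/2 := by linarith
    have hA0 : (0:ℝ) ≤ A := by rw [hAval]; linarith
    have hfin : A ^ (1/(2:ℝ)) * B ^ (1/(2:ℝ)) = Real.sqrt (1 - σ^2) / 2 := by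
      rw [← Real.sqrt_eq_rpow, ← Real.sqrt_eq_rpow, ← Real.sqrt_mul hA0, hAval, hBval]
      rw [show (1 + σ)/2 * ((1 - σ)/2) = (1 - σ^2) * (1/2)^2 by ring]
      rw [Real.sqrt_mul (by nlinarith) ((1/2:ℝ)^2), Real.sqrt_sq (by norm_num : (0:ℝ) ≤ 1/2)]
      ring
    rw [hre]
    calc (∫ x : ℝ, ((starRingEnd ℂ) (f x) * g x).re) ≤ ∫ x, ‖f x‖ * ‖g x‖ := step1
      _ ≤ A ^ (1/(2:ℝ)) * B ^ (1/(2:ℝ)) := step2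
      _ = Real.sqrt (1 - σ^2) / 2 := hfin
  rw [hbig]
  nlinarith [hKLP, hcs, ht]

/-- For N=1 at zero coupling (`λ = 0`): the quantum Rabi Levy–Lieb functional equals
`1 + ξ² - t√(1-σ²)`; the infimum of `⟨ψ,H₀ψ⟩` with
`H₀ = (-d²/dx² + x²)𝟙 - tσ_x` over normalized `ψ = (f,g)` with magnetization `σ` and
displacement `ξ`. -/
theorem stmt_12 (t : ℝ) (ht : 0 < t) (σ ξ : ℝ) (hσ : σ ∈ Set.Icc (-1 : ℝ) 1) :
    sInf { e : ℝ | ∃ f g : ℝ → ℂ,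
      Differentiable ℝ f ∧ Differentiable ℝ g ∧
      Integrable (fun x => ‖f x‖ ^ 2) ∧ Integrable (fun x => ‖g x‖ ^ 2) ∧
      Integrable (fun x => ‖deriv f x‖ ^ 2) ∧ Integrable (fun x => ‖deriv g x‖ ^ 2) ∧
      Integrable (fun x => x ^ 2 * (‖f x‖ ^ 2 + ‖g x‖ ^ 2)) ∧
      Integrable (fun x => x * (‖f x‖ ^ 2 + ‖g x‖ ^ 2)) ∧
      Integrable (fun x => (starRingEnd ℂ) (f x) * g x) ∧
      (∫ x : ℝ, (‖f x‖ ^ 2 + ‖g x‖ ^ 2)) = 1 ∧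
      (∫ x : ℝ, (‖f x‖ ^ 2 - ‖g x‖ ^ 2)) = σ ∧
      (∫ x : ℝ, x * (‖f x‖ ^ 2 + ‖g x‖ ^ 2)) = ξ ∧
      e = (∫ x : ℝ, (‖deriv f x‖ ^ 2 + ‖deriv g x‖ ^ 2 + x ^ 2 * (‖f x‖ ^ 2 + ‖g x‖ ^ 2)))
          - 2 * t * (∫ x : ℝ, (starRingEnd ℂ) (f x) * g x).re }
    = 1 + ξ ^ 2 - t * Real.sqrt (1 - σ ^ 2) := by
  have hmem : (1 + ξ ^ 2 - t * Real.sqrt (1 - σ ^ 2)) ∈ { e : ℝ | ∃ f g : ℝ → ℂ,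
      Differentiable ℝ f ∧ Differentiable ℝ g ∧
      Integrable (fun x => ‖f x‖ ^ 2) ∧ Integrable (fun x => ‖g x‖ ^ 2) ∧
      Integrable (fun x => ‖deriv f x‖ ^ 2) ∧ Integrable (fun x => ‖deriv g x‖ ^ 2) ∧
      Integrable (fun x => x ^ 2 * (‖f x‖ ^ 2 + ‖g x‖ ^ 2)) ∧
      Integrable (fun x => x * (‖f x‖ ^ 2 + ‖g x‖ ^ 2)) ∧
      Integrable (fun x => (starRingEnd ℂ) (f x) * g x) ∧
      (∫ x : ℝ, (‖f x‖ ^ 2 + ‖g x‖ ^ 2)) = 1 ∧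
      (∫ x : ℝ, (‖f x‖ ^ 2 - ‖g x‖ ^ 2)) = σ ∧
      (∫ x : ℝ, x * (‖f x‖ ^ 2 + ‖g x‖ ^ 2)) = ξ ∧
      e = (∫ x : ℝ, (‖deriv f x‖ ^ 2 + ‖deriv g x‖ ^ 2 + x ^ 2 * (‖f x‖ ^ 2 + ‖g x‖ ^ 2)))
          - 2 * t * (∫ x : ℝ, (starRingEnd ℂ) (f x) * g x).re } := by
    obtain ⟨f, g, h1, h2, h3, h4, h5, h6, h7, h8, h9, h10, h11, h12, h13⟩ :=
      gaussian_member t σ ξ hσ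
    exact ⟨f, g, h1, h2, h3, h4, h5, h6, h7, h8, h9, h10, h11, h12, h13⟩
  have hlb : ∀ e ∈ { e : ℝ | ∃ f g : ℝ → ℂ,
      Differentiable ℝ f ∧ Differentiable ℝ g ∧
      Integrable (fun x => ‖f x‖ ^ 2) ∧ Integrable (fun x => ‖g x‖ ^ 2) ∧
      Integrable (fun x => ‖deriv f x‖ ^ 2) ∧ Integrable (fun x => ‖deriv g x‖ ^ 2) ∧
      Integrable (fun x => x ^ 2 * (‖f x‖ ^ 2 + ‖g x‖ ^ 2)) ∧
      Integrable (fun x => x * (‖f x‖ ^ 2 + ‖g x‖ ^ 2)) ∧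
      Integrable (fun x => (starRingEnd ℂ) (f x) * g x) ∧
      (∫ x : ℝ, (‖f x‖ ^ 2 + ‖g x‖ ^ 2)) = 1 ∧
      (∫ x : ℝ, (‖f x‖ ^ 2 - ‖g x‖ ^ 2)) = σ ∧
      (∫ x : ℝ, x * (‖f x‖ ^ 2 + ‖g x‖ ^ 2)) = ξ ∧
      e = (∫ x : ℝ, (‖deriv f x‖ ^ 2 + ‖deriv g x‖ ^ 2 + x ^ 2 * (‖f x‖ ^ 2 + ‖g x‖ ^ 2)))
          - 2 * t * (∫ x : ℝ, (starRingEnd ℂ) (f x) * g x).re },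
      1 + ξ ^ 2 - t * Real.sqrt (1 - σ ^ 2) ≤ e := by
    rintro e ⟨f, g, hdf, hdg, h3, h4, h5, h6, h7, h8, h9, h10, h11, h12, he⟩
    rw [he]
    exact lower_bound t ht σ ξ hσ f g hdf hdg h3 h4 h5 h6 h7 h8 h9 h10 h11 h12
  exact le_antisymm (csInf_le ⟨_, hlb⟩ hmem) (le_csInf ⟨_, hmem⟩ hlb)
end
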